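/- There is an absolute constant C such that for all α > 0 and all β > 0, |F(α, β)| ≤ C/α. -/

import Mathlib

open MeasureTheory

/-- The Gaussian weight `Γ(x) = exp(−πx²)`. -/
noncomputable def gauss (x : ℝ) : ℝ := Real.exp (-Real.pi * x ^ 2)

/-- `F(α,β) = ∫_{−∞}^{∞} Γ(x) e(−βx³ − αx) dx`, where `e(x) = exp(2πix)`. -/
noncomputable def Fab (α β : ℝ) : ℂ :=
  ∫ x : ℝ, (gauss x : ℂ) * Complex.exp (2 * Real.pi * Complex.I * ((-β * x ^ 3 - α * x : ℝ) : ℂ))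

open Real Filter Set

noncomputable def GG (α β x : ℝ) : ℂ :=
  Complex.exp (2 * Real.pi * Complex.I * ((-β * x ^ 3 - α * x : ℝ) : ℂ))

noncomputable def ww (α β x : ℝ) : ℝ := gauss x / (2 * Real.pi * (3 * β * x ^ 2 + α))

noncomputable def Dd (α β x : ℝ) : ℝ :=
  (gauss x * (-Real.pi * (2 * x)) * (2 * Real.pi * (3 * β * x ^ 2 + α)) -
    gauss x * (2 * Real.pi * (3 * β * (2 * x)))) / (2 * Real.pi * (3 * β * x ^ 2 + α)) ^ 2

variable {α β : ℝ}

lemma Qpos (hα : 0 < α) (hβ : 0 < β) (x : ℝ) : 0 < 2 * Real.pi * (3 * β * x ^ 2 + α) := by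
  have := Real.pi_pos; positivity

lemma gauss_hasDeriv (x : ℝ) : HasDerivAt gauss (gauss x * (-Real.pi * (2 * x))) x := by
  have h : HasDerivAt (fun x : ℝ => -Real.pi * x ^ 2) (-Real.pi * (2 * x)) x := by
    simpa using (hasDerivAt_pow 2 x).const_mul (-Real.pi)
  unfold gauss
  simpa using h.exp

lemma ww_hasDeriv (hα : 0 < α) (hβ : 0 < β) (x : ℝ) :
    HasDerivAt (ww α β) (Dd α β x) x := by
  have hq : HasDerivAt (fun x : ℝ => 2 * Real.pi * (3 * β * x ^ 2 + α))
      (2 * Real.pi * (3 * β * (2 * x))) x := by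
    have h : HasDerivAt (fun x : ℝ => 3 * β * x ^ 2 + α) (3 * β * (2 * x)) x := by
      simpa using ((hasDerivAt_pow 2 x).const_mul (3 * β)).add_const α
    simpa [mul_assoc] using h.const_mul (2 * Real.pi)
  exact (gauss_hasDeriv x).div hq (Qpos hα hβ x).ne'

lemma GG_hasDeriv (x : ℝ) :
    HasDerivAt (GG α β)
      (GG α β x * (2 * Real.pi * Complex.I * ((-β * (3 * x ^ 2) - α : ℝ) : ℂ))) x := by
  have h1 : HasDerivAt (fun x : ℝ => -β * x ^ 3 - α * x) (-β * (3 * x ^ 2) - α) x := by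
    have := ((hasDerivAt_pow 3 x).const_mul (-β)).sub ((hasDerivAt_id x).const_mul α)
    simpa [mul_comm, Pi.sub_def] using this
  have h2 := (h1.ofReal_comp).const_mul (2 * Real.pi * Complex.I)
  have h3 := h2.cexp
  unfold GG
  simpa [mul_comm, mul_left_comm, mul_assoc] using h3

lemma normGG (α β x : ℝ) : ‖GG α β x‖ = 1 := by
  have h : 2 * (Real.pi : ℂ) * Complex.I * ((-β * x ^ 3 - α * x : ℝ) : ℂ)
      = ((2 * Real.pi * (-β * x ^ 3 - α * x) : ℝ) : ℂ) * Complex.I := by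
    push_cast; ring
  rw [GG, h, Complex.norm_exp_ofReal_mul_I]

lemma g_hasDeriv (hα : 0 < α) (hβ : 0 < β) (x : ℝ) :
    HasDerivAt (fun x => (ww α β x : ℂ) * Complex.I * GG α β x)
      ((Dd α β x : ℂ) * Complex.I * GG α β x + (gauss x : ℂ) * GG α β x) x := by
  have hwc : HasDerivAt (fun x => (ww α β x : ℂ) * Complex.I) ((Dd α β x : ℂ) * Complex.I) x :=
    ((ww_hasDeriv hα hβ x).ofReal_comp).mul_const Complex.I
  have h := hwc.mul (GG_hasDeriv (α := α) (β := β) x)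
  convert h using 1
  · rfl
  · rfl
  have hreal : ww α β x * (2 * Real.pi * (3 * β * x ^ 2 + α)) = gauss x := by
    rw [ww]; field_simp
  have hkey : (ww α β x : ℂ) * Complex.I *
      (GG α β x * (2 * Real.pi * Complex.I * ((-β * (3 * x ^ 2) - α : ℝ) : ℂ)))
      = (gauss x : ℂ) * GG α β x := by
    rw [← hreal]
    push_cast
    linear_combination (2 * (Real.pi : ℂ) * (ww α β x : ℂ) *
      (-(β : ℂ) * (3 * (x:ℂ) ^ 2) - α) * GG α β x) * Complex.I_sq
  rw [hkey]

lemma Dd_eq (x : ℝ) :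
    Dd α β x = -x * (gauss x * (4 * Real.pi ^ 2 * (3 * β * x ^ 2 + α) + 12 * Real.pi * β) /
      (2 * Real.pi * (3 * β * x ^ 2 + α)) ^ 2) := by
  rw [Dd]; ring

lemma Dd_bound (hα : 0 < α) (hβ : 0 < β) (x : ℝ) :
    |Dd α β x| ≤ (1 / α + 3 * β / (Real.pi * α ^ 2)) * (|x| * gauss x) := by
  have hπ := Real.pi_pos
  have hg : 0 < gauss x := Real.exp_pos _
  have hQ : α ≤ 3 * β * x ^ 2 + α := by nlinarith [mul_nonneg hβ.le (sq_nonneg x)]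
  have hQ0 : 0 < 3 * β * x ^ 2 + α := lt_of_lt_of_le hα hQ
  have hN0 : 0 ≤ gauss x * (4 * Real.pi ^ 2 * (3 * β * x ^ 2 + α) + 12 * Real.pi * β) /
      (2 * Real.pi * (3 * β * x ^ 2 + α)) ^ 2 :=
    div_nonneg (mul_nonneg hg.le (by positivity)) (by positivity)
  rw [Dd_eq, abs_mul, abs_neg, abs_of_nonneg hN0]
  have hmain : gauss x * (4 * Real.pi ^ 2 * (3 * β * x ^ 2 + α) + 12 * Real.pi * β) /
      (2 * Real.pi * (3 * β * x ^ 2 + α)) ^ 2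
      ≤ (1 / α + 3 * β / (Real.pi * α ^ 2)) * gauss x := ?_
  · calc |x| * (gauss x * (4 * Real.pi ^ 2 * (3 * β * x ^ 2 + α) + 12 * Real.pi * β) /
          (2 * Real.pi * (3 * β * x ^ 2 + α)) ^ 2)
        ≤ |x| * ((1 / α + 3 * β / (Real.pi * α ^ 2)) * gauss x) :=
          mul_le_mul_of_nonneg_left hmain (abs_nonneg x)
      _ = (1 / α + 3 * β / (Real.pi * α ^ 2)) * (|x| * gauss x) := by ring
  have hsplit : gauss x * (4 * Real.pi ^ 2 * (3 * β * x ^ 2 + α) + 12 * Real.pi * β) /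
      (2 * Real.pi * (3 * β * x ^ 2 + α)) ^ 2
      = gauss x / (3 * β * x ^ 2 + α)
        + gauss x * (12 * Real.pi * β) / (2 * Real.pi * (3 * β * x ^ 2 + α)) ^ 2 := by
    field_simp; ring
  rw [hsplit]
  have h1 : gauss x / (3 * β * x ^ 2 + α) ≤ gauss x / α := by gcongr
  have h2 : gauss x * (12 * Real.pi * β) / (2 * Real.pi * (3 * β * x ^ 2 + α)) ^ 2
      ≤ gauss x * (12 * Real.pi * β) / (2 * Real.pi * α) ^ 2 := by
    have : (2 * Real.pi * α) ^ 2 ≤ (2 * Real.pi * (3 * β * x ^ 2 + α)) ^ 2 := by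
      have h := Real.pi_pos
      apply sq_le_sq' <;> nlinarith [mul_nonneg hβ.le (sq_nonneg x)]
    apply div_le_div_of_nonneg_left (mul_nonneg hg.le (by positivity)) (by positivity) this
  have h3 : gauss x * (12 * Real.pi * β) / (2 * Real.pi * α) ^ 2
      = 3 * β / (Real.pi * α ^ 2) * gauss x := by
    field_simp; ring
  calc _ ≤ gauss x / α + gauss x * (12 * Real.pi * β) / (2 * Real.pi * α) ^ 2 :=
        add_le_add h1 h2
    _ = (1 / α + 3 * β / (Real.pi * α ^ 2)) * gauss x := by rw [h3]; field_simp

lemma gauss_cont : Continuous gauss := by unfold gauss; fun_prop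

lemma GG_cont : Continuous (GG α β) := by unfold GG; fun_prop

lemma Dd_cont (hα : 0 < α) (hβ : 0 < β) : Continuous (Dd α β) := by
  unfold Dd
  apply Continuous.div
  · exact ((gauss_cont.mul (by fun_prop)).mul (by fun_prop)).sub (gauss_cont.mul (by fun_prop))
  · fun_prop
  · intro x
    exact (pow_pos (Qpos hα hβ x) 2).ne'

lemma absx_gauss_integrable : Integrable (fun x : ℝ => |x| * gauss x) := by
  have h := (integrable_mul_exp_neg_mul_sq Real.pi_pos).abs
  refine h.congr (Filter.Eventually.of_forall fun x => ?_)
  show |x * Real.exp (-Real.pi * x ^ 2)| = |x| * gauss x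
  rw [abs_mul, abs_of_nonneg (Real.exp_pos _).le]
  rfl

lemma Dd_integrable (hα : 0 < α) (hβ : 0 < β) : Integrable (Dd α β) := by
  refine (absx_gauss_integrable.const_mul (1 / α + 3 * β / (Real.pi * α ^ 2))).mono'
    (Dd_cont hα hβ).aestronglyMeasurable
    (Filter.Eventually.of_forall fun x => ?_)
  rw [Real.norm_eq_abs]
  exact Dd_bound hα hβ x

lemma DIG_integrable (hα : 0 < α) (hβ : 0 < β) :
    Integrable (fun x => (Dd α β x : ℂ) * Complex.I * GG α β x) := by
  refine (absx_gauss_integrable.const_mul (1 / α + 3 * β / (Real.pi * α ^ 2))).mono'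
    ?_ (Filter.Eventually.of_forall fun x => ?_)
  · exact (((Complex.continuous_ofReal.comp (Dd_cont hα hβ)).mul continuous_const).mul
      GG_cont).aestronglyMeasurable
  · rw [norm_mul, norm_mul, normGG, Complex.norm_real, Complex.norm_I, Real.norm_eq_abs]
    simpa using Dd_bound hα hβ x

lemma gaussG_integrable (hα : 0 < α) (hβ : 0 < β) :
    Integrable (fun x => (gauss x : ℂ) * GG α β x) := by
  refine (integrable_exp_neg_mul_sq Real.pi_pos).mono'
    ((Complex.continuous_ofReal.comp gauss_cont).mul GG_cont).aestronglyMeasurable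
    (Filter.Eventually.of_forall fun x => ?_)
  rw [norm_mul, normGG, mul_one, Complex.norm_real, Real.norm_eq_abs]
  unfold gauss
  rw [abs_of_nonneg (Real.exp_pos _).le]

lemma gauss_tendsto : Tendsto gauss (cocompact ℝ) (nhds 0) := by
  have h := tendsto_rpow_abs_mul_exp_neg_mul_sq_cocompact Real.pi_pos 0
  refine h.congr fun x => ?_
  rw [Real.rpow_zero, one_mul]
  rfl

lemma ww_bound (hα : 0 < α) (hβ : 0 < β) (x : ℝ) :
    ‖ww α β x‖ ≤ gauss x / (2 * Real.pi * α) := by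
  have hg : 0 < gauss x := Real.exp_pos _
  rw [Real.norm_eq_abs, ww, abs_of_nonneg (div_nonneg hg.le (Qpos hα hβ x).le)]
  apply div_le_div_of_nonneg_left hg.le (by positivity)
  nlinarith [mul_nonneg hβ.le (sq_nonneg x), Real.pi_pos]

lemma g_tendsto (hα : 0 < α) (hβ : 0 < β) (l : Filter ℝ) (hl : l ≤ cocompact ℝ) :
    Tendsto (fun x => (ww α β x : ℂ) * Complex.I * GG α β x) l (nhds 0) := by
  apply squeeze_zero_norm (a := fun x => gauss x / (2 * Real.pi * α))
  · intro x
    rw [norm_mul, norm_mul, normGG, Complex.norm_real, Complex.norm_I, mul_one, mul_one]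
    exact ww_bound hα hβ x
  · simpa using (gauss_tendsto.mono_left hl).div_const (2 * Real.pi * α)

lemma ww_tendsto (hα : 0 < α) (hβ : 0 < β) (l : Filter ℝ) (hl : l ≤ cocompact ℝ) :
    Tendsto (ww α β) l (nhds 0) := by
  apply squeeze_zero_norm (a := fun x => gauss x / (2 * Real.pi * α))
  · exact ww_bound hα hβ
  · simpa using (gauss_tendsto.mono_left hl).div_const (2 * Real.pi * α)

lemma Dd_nonpos (hα : 0 < α) (hβ : 0 < β) {x : ℝ} (hx : 0 ≤ x) : Dd α β x ≤ 0 := by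
  rw [Dd_eq]
  apply mul_nonpos_of_nonpos_of_nonneg (neg_nonpos.mpr hx)
  exact div_nonneg (mul_nonneg (Real.exp_pos _).le (by positivity)) (by positivity)

lemma Dd_nonneg (hα : 0 < α) (hβ : 0 < β) {x : ℝ} (hx : x ≤ 0) : 0 ≤ Dd α β x := by
  rw [Dd_eq]
  apply mul_nonneg (neg_nonneg.mpr hx)
  exact div_nonneg (mul_nonneg (Real.exp_pos _).le (by positivity)) (by positivity)

lemma ww_zero (hα : 0 < α) (hβ : 0 < β) : ww α β 0 = 1 / (2 * Real.pi * α) := by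
  simp [ww, gauss]

lemma int_abs_Dd (hα : 0 < α) (hβ : 0 < β) :
    ∫ x : ℝ, |Dd α β x| = 2 * ww α β 0 := by
  have hint := Dd_integrable hα hβ
  have hIoi : ∫ x in Ioi (0:ℝ), Dd α β x = 0 - ww α β 0 :=
    integral_Ioi_of_hasDerivAt_of_tendsto' (fun x _ => ww_hasDeriv hα hβ x)
      hint.integrableOn (ww_tendsto hα hβ atTop _root_.atTop_le_cocompact)
  have hIic : ∫ x in Iic (0:ℝ), Dd α β x = ww α β 0 - 0 :=
    integral_Iic_of_hasDerivAt_of_tendsto' (fun x _ => ww_hasDeriv hα hβ x)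
      hint.integrableOn (ww_tendsto hα hβ atBot _root_.atBot_le_cocompact)
  have h1 : ∫ x in Ioi (0:ℝ), |Dd α β x| = ww α β 0 := by
    rw [setIntegral_congr_fun measurableSet_Ioi
      (fun x hx => abs_of_nonpos (Dd_nonpos hα hβ (le_of_lt hx)))]
    rw [integral_neg, hIoi]
    ring
  have h2 : ∫ x in Iic (0:ℝ), |Dd α β x| = ww α β 0 := by
    rw [setIntegral_congr_fun measurableSet_Iic
      (fun x hx => abs_of_nonneg (Dd_nonneg hα hβ hx))]
    rw [hIic]; ring
  rw [← intervalIntegral.integral_Iic_add_Ioi (b := (0:ℝ)) hint.abs.integrableOn hint.abs.integrableOn, h1, h2]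
  ring

theorem stmt7 :
    ∃ C : ℝ, ∀ α β : ℝ, 0 < α → 0 < β → ‖Fab α β‖ ≤ C / α := by
  use 1
  intro α β hα hβ
  have hDIG := DIG_integrable hα hβ
  have hGauss := gaussG_integrable hα hβ
  have hf'int : Integrable (fun x =>
      (Dd α β x : ℂ) * Complex.I * GG α β x + (gauss x : ℂ) * GG α β x) := hDIG.add hGauss
  have hIoi := integral_Ioi_of_hasDerivAt_of_tendsto' (a := 0)
      (fun x _ => g_hasDeriv hα hβ x) hf'int.integrableOn
      (g_tendsto hα hβ atTop _root_.atTop_le_cocompact)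
  have hIic := integral_Iic_of_hasDerivAt_of_tendsto' (a := 0)
      (fun x _ => g_hasDeriv hα hβ x) hf'int.integrableOn
      (g_tendsto hα hβ atBot _root_.atBot_le_cocompact)
  have htot : ∫ x : ℝ, ((Dd α β x : ℂ) * Complex.I * GG α β x + (gauss x : ℂ) * GG α β x) = 0 := by
    rw [← intervalIntegral.integral_Iic_add_Ioi (b := (0:ℝ)) hf'int.integrableOn hf'int.integrableOn,
      hIic, hIoi]
    ring
  rw [integral_add hDIG hGauss] at htot
  have hFab : Fab α β = ∫ x : ℝ, (gauss x : ℂ) * GG α β x := rfl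
  have hFab2 : Fab α β = -∫ x : ℝ, (Dd α β x : ℂ) * Complex.I * GG α β x := by
    rw [hFab]
    linear_combination htot
  rw [hFab2, norm_neg]
  have hle : ‖∫ x : ℝ, (Dd α β x : ℂ) * Complex.I * GG α β x‖
      ≤ ∫ x : ℝ, |Dd α β x| := by
    refine (norm_integral_le_integral_norm _).trans_eq ?_
    refine integral_congr_ae (Filter.Eventually.of_forall fun x => ?_)
    show ‖(Dd α β x : ℂ) * Complex.I * GG α β x‖ = |Dd α β x|
    rw [norm_mul, norm_mul, normGG, Complex.norm_real, Complex.norm_I, mul_one, mul_one,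
      Real.norm_eq_abs]
  have hval : (∫ x : ℝ, |Dd α β x|) = 1 / (Real.pi * α) := by
    rw [int_abs_Dd hα hβ, ww_zero hα hβ]
    field_simp
  refine (hle.trans_eq hval).trans ?_
  rw [div_le_div_iff₀ (by positivity) hα]
  nlinarith [Real.pi_gt_three]
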